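/- Let G be a graph with a perfect matching M. A subset S ⊆ M is a forcing set of M (i.e., M is the unique perfect matching of G containing S) if and only if every M-alternating cycle of G contains at least one edge of S. -/

import Mathlib

open SimpleGraph

/-- `M` is a perfect matching of the graph `G` restricted to the vertex set `A`:
a set of pairwise disjoint edges of `G`, with all endpoints in `A`, covering every
vertex of `A`. -/
def IsPMOn {V : Type*} (G : SimpleGraph V) (A : Set V) (M : Set (Sym2 V)) : Prop :=
  M ⊆ G.edgeSet ∧ (∀ e ∈ M, ∀ v ∈ e, v ∈ A) ∧
    (M.Pairwise fun e f => ∀ v, v ∈ e → v ∉ f) ∧ (∀ v ∈ A, ∃ e ∈ M, v ∈ e)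

/-- `S` is a forcing set of the perfect matching `M` of `G` (restricted to `A`):
`S ⊆ M` and `M` is the unique perfect matching containing `S`. -/
def IsForcingOn {V : Type*} (G : SimpleGraph V) (A : Set V) (M S : Set (Sym2 V)) : Prop :=
  S ⊆ M ∧ ∀ M', IsPMOn G A M' → S ⊆ M' → M' = M

/-- The forcing number of a perfect matching: minimum size of a forcing set. -/
noncomputable def forcingNumOn {V : Type*} (G : SimpleGraph V) (A : Set V)
    (M : Set (Sym2 V)) : ℕ :=
  sInf {n | ∃ S, IsForcingOn G A M S ∧ S.ncard = n}

/-- Vertices remaining after deleting the endpoints of edges in `S`. -/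
def delVerts {V : Type*} (S : Set (Sym2 V)) : Set V := {v | ∀ e ∈ S, v ∉ e}

/-- A closed walk `c` is an `M`-alternating cycle: it is a cycle and its edges
alternate between `M` and its complement (including around the wrap). -/
def IsAltCycle {V : Type*} (G : SimpleGraph V) (M : Set (Sym2 V)) {v : V}
    (c : G.Walk v v) : Prop :=
  c.IsCycle ∧ c.edges.Chain' (fun e f => e ∈ M ↔ f ∉ M) ∧
    ∀ e f, c.edges.head? = some e → c.edges.getLast? = some f → (f ∈ M ↔ e ∉ M)

namespace ForcingAux

variable {V : Type*} {G : SimpleGraph V} {M : Set (Sym2 V)}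

lemma pm_unique (hM : IsPMOn G Set.univ M) {e f : Sym2 V} (he : e ∈ M) (hf : f ∈ M)
    {v : V} (hv : v ∈ e) (hv' : v ∈ f) : e = f := by
  by_contra h
  exact hM.2.2.1 he hf h v hv hv'

noncomputable def partner (hM : IsPMOn G Set.univ M) (v : V) : V :=
  Sym2.Mem.other (hM.2.2.2 v trivial).choose_spec.2

lemma partner_spec (hM : IsPMOn G Set.univ M) (v : V) : s(v, partner hM v) ∈ M := by
  rw [partner, Sym2.other_spec]
  exact (hM.2.2.2 v trivial).choose_spec.1

lemma partner_eq (hM : IsPMOn G Set.univ M) {e : Sym2 V} (he : e ∈ M) {v : V} (hv : v ∈ e) :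
    e = s(v, partner hM v) :=
  pm_unique hM he (partner_spec hM v) hv (Sym2.mem_mk_left _ _)

lemma mem_pm_iff (hM : IsPMOn G Set.univ M) (v w : V) :
    s(v, w) ∈ M ↔ w = partner hM v := by
  constructor
  · intro h
    have := partner_eq hM h (Sym2.mem_mk_left v w)
    exact (Sym2.congr_right.mp this)
  · rintro rfl; exact partner_spec hM v

lemma partner_ne (hM : IsPMOn G Set.univ M) (v : V) : partner hM v ≠ v := by
  have := hM.1 (partner_spec hM v)
  rw [mem_edgeSet] at this
  exact (G.ne_of_adj this).symm

lemma partner_invol (hM : IsPMOn G Set.univ M) : Function.Involutive (partner hM) := by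
  intro v
  have h : s(partner hM v, v) ∈ M := by rw [Sym2.eq_swap]; exact partner_spec hM v
  exact ((mem_pm_iff hM _ _).mp h).symm



/-- the dihedral distinctness lemma -/
lemma dihedral {f g : V → V} (hf : Function.Involutive f) (hg : Function.Involutive g)
    (hffix : ∀ v, f v ≠ v) (hgfix : ∀ v, g v ≠ v) (v0 : V) :
    ∀ i j, (g ∘ f)^[i] v0 ≠ f ((g ∘ f)^[j] v0) := by
  set σ := g ∘ f with hσ
  -- swap
  have swap : ∀ i j, σ^[i] v0 = f (σ^[j] v0) → σ^[j] v0 = f (σ^[i] v0) := by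
    intro i j h
    have := congrArg f h
    rw [hf] at this
    exact this.symm
  -- step : E(i+1, j) → E(j+1, i)
  have step : ∀ i j, σ^[i+1] v0 = f (σ^[j] v0) → σ^[j+1] v0 = f (σ^[i] v0) := by
    intro i j h
    have h1 : g (σ^[i+1] v0) = g (f (σ^[j] v0)) := congrArg g h
    rw [Function.iterate_succ_apply'] at h1
    have h2 : σ (σ^[i] v0) = g (f (σ^[i] v0)) := rfl
    rw [h2, hg] at h1
    have h3 : σ^[j+1] v0 = σ (σ^[j] v0) := Function.iterate_succ_apply' σ j v0
    rw [h3]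
    exact hσ ▸ h1.symm
  -- combined : E(i,j), j ≥ 1 → E(i+1, j-1)
  have step2 : ∀ i j, σ^[i] v0 = f (σ^[j+1] v0) → σ^[i+1] v0 = f (σ^[j] v0) := by
    intro i j h
    exact step j i (swap i (j+1) h)
  -- strong induction on j - i for i ≤ j
  have main : ∀ d i j, i ≤ j → j - i = d → σ^[i] v0 ≠ f (σ^[j] v0) := by
    intro d
    induction d using Nat.strong_induction_on with
    | _ d IH =>
      intro i j hij hd h
      match d, hd with
      | 0, hd =>
        have : i = j := by omega
        subst this
        exact hffix _ h.symm
      | 1, hd =>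
        have : j = i + 1 := by omega
        subst this
        have h2 := swap i (i+1) h
        -- σ^[i+1] v0 = f (σ^[i] v0);  σ^[i+1] v0 = g (f (σ^[i] v0))
        have h3 : σ^[i+1] v0 = g (f (σ^[i] v0)) := Function.iterate_succ_apply' σ i v0
        rw [h2] at h3
        exact hgfix _ h3.symm
      | (d+2), hd =>
        have hj : j = (j - 1) + 1 := by omega
        rw [hj] at h
        have h2 := step2 i (j-1) h
        exact IH d (by omega) (i+1) (j-1) (by omega) (by omega) h2
  intro i j h
  rcases le_or_gt i j with hle | hlt
  · exact main _ i j hle rfl h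
  · exact main _ j i (le_of_lt hlt) rfl (swap i j h)

/-- build a walk following a vertex sequence -/
def buildWalk {G : SimpleGraph V} (vs : ℕ → V) (h : ∀ t, G.Adj (vs t) (vs (t+1))) :
    (n : ℕ) → G.Walk (vs 0) (vs n)
  | 0 => Walk.nil
  | n+1 => (buildWalk vs h n).concat (h n)

lemma buildWalk_edges {G : SimpleGraph V} (vs : ℕ → V) (h : ∀ t, G.Adj (vs t) (vs (t+1)))
    (n : ℕ) : (buildWalk vs h n).edges = (List.range n).map (fun t => s(vs t, vs (t+1))) := by
  induction n with
  | zero => simp [buildWalk]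
  | succ n ih =>
    rw [buildWalk, Walk.edges_concat, ih, List.range_succ, List.map_append]
    simp

lemma buildWalk_support {G : SimpleGraph V} (vs : ℕ → V) (h : ∀ t, G.Adj (vs t) (vs (t+1)))
    (n : ℕ) : (buildWalk vs h n).support = (List.range (n+1)).map vs := by
  induction n with
  | zero => simp [buildWalk, List.range_succ]
  | succ n ih =>
    rw [buildWalk, Walk.support_concat, ih, List.range_succ (n := n+1), List.map_append]
    simp


lemma exists_alt_cycle [Fintype V] {M' : Set (Sym2 V)}
    (hM : IsPMOn G Set.univ M) (hM' : IsPMOn G Set.univ M') (hne : M' ≠ M) :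
    ∃ (v : V) (c : G.Walk v v), IsAltCycle G M c ∧
      ∀ e ∈ c.edges, e ∈ (M \ M') ∪ (M' \ M) := by
  classical
  set f := partner hM with hfdef
  set g := partner hM' with hgdef
  have hfI : Function.Involutive f := partner_invol hM
  have hgI : Function.Involutive g := partner_invol hM'
  -- find a vertex where the partners differ
  have hex : ∃ v0, f v0 ≠ g v0 := by
    by_contra h
    push_neg at h
    apply hne
    ext e
    induction e using Sym2.ind with
    | _ a b =>
      rw [mem_pm_iff hM', mem_pm_iff hM, ← hfdef, ← hgdef, h a]
  obtain ⟨v0, hv0⟩ := hex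
  set σ : V → V := g ∘ f with hσdef
  have hσinj : Function.Injective σ := hgI.injective.comp hfI.injective
  have hσit : ∀ n, Function.Injective (σ^[n]) := fun n => hσinj.iterate n
  -- existence of a positive period
  have hper : ∃ n, 0 < n ∧ σ^[n] v0 = v0 := by
    obtain ⟨a, b, hab, he⟩ := Finite.exists_ne_map_eq_of_infinite (fun n : ℕ => σ^[n] v0)
    rcases lt_or_gt_of_ne hab with h | h
    · refine ⟨b - a, by omega, ?_⟩
      apply hσit a
      rw [← Function.iterate_add_apply]
      have : a + (b - a) = b := by omega
      rw [this]
      exact he.symm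
    · refine ⟨a - b, by omega, ?_⟩
      apply hσit b
      rw [← Function.iterate_add_apply]
      have : b + (a - b) = a := by omega
      rw [this]
      exact he
  set k := Nat.find hper with hkdef
  obtain ⟨hk1, hk2⟩ : 0 < k ∧ σ^[k] v0 = v0 := Nat.find_spec hper
  have hkmin : ∀ m, 0 < m → m < k → σ^[m] v0 ≠ v0 := by
    intro m h1 h2 h3
    exact Nat.find_min hper h2 ⟨h1, h3⟩
  have hσ1 : σ v0 ≠ v0 := by
    intro h
    rcases Nat.lt_or_ge 1 k with h1 | h1
    · exact hkmin 1 one_pos h1 (by simpa using h)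
    · have : k = 1 := by omega
      rw [this] at hk2
      simp at hk2
      -- σ v0 = v0 means g (f v0) = v0 so f v0 = g v0
      have := congrArg g hk2
      rw [hσdef] at hk2
      simp at hk2
      have : f v0 = g v0 := by
        have h2 := congrArg g hk2
        rwa [hgI] at h2
      exact hv0 this
  have hk2' : 2 ≤ k := by
    rcases Nat.lt_or_ge k 2 with h | h
    · interval_cases k
      · simp at hk2; exact absurd hk2 hσ1
    · exact h
  -- injectivity of the sigma orbit
  have hinj2 : ∀ i j, i ≤ j → j - i < k → σ^[i] v0 = σ^[j] v0 → i = j := by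
    intro i j hij hjk h
    by_contra hne'
    have hd : 0 < j - i := by omega
    apply hkmin (j - i) hd hjk
    apply hσit i
    rw [← Function.iterate_add_apply]
    have : i + (j - i) = j := by omega
    rw [this, h]
  have D2 : ∀ i j, σ^[i] v0 ≠ f (σ^[j] v0) :=
    dihedral hfI hgI (fun v => partner_ne hM v) (fun v => partner_ne hM' v) v0

  -- the alternating vertex sequence
  set vseq : ℕ → V := fun t => if Even t then σ^[t/2] v0 else f (σ^[t/2] v0) with hvseq
  have hv2 : ∀ i, vseq (2*i) = σ^[i] v0 := by
    intro i
    have h1 : Even (2*i) := even_two_mul i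
    simp only [hvseq, if_pos h1]
    congr 1
    omega
  have hv21 : ∀ i, vseq (2*i+1) = f (σ^[i] v0) := by
    intro i
    have h1 : ¬ Even (2*i+1) := by simp [Nat.even_add_one, parity_simps]
    simp only [hvseq, if_neg h1]
    congr 2
    omega
  have hadj : ∀ t, G.Adj (vseq t) (vseq (t+1)) := by
    intro t
    rcases Nat.even_or_odd t with he | ho
    · obtain ⟨i, hi⟩ := he
      have ht : t = 2*i := by omega
      subst ht
      rw [hv2, hv21]
      rw [← mem_edgeSet]
      exact hM.1 (partner_spec hM _)
    · obtain ⟨i, hi⟩ := ho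
      subst hi
      have h1 : 2*i+1+1 = 2*(i+1) := by ring
      rw [h1, hv21, hv2, Function.iterate_succ_apply']
      rw [← mem_edgeSet]
      exact hM'.1 (partner_spec hM' (f (σ^[i] v0)))
  set eseq : ℕ → Sym2 V := fun t => s(vseq t, vseq (t+1)) with heseq
  have hsucc : ∀ i, σ^[i+1] v0 ≠ σ^[i] v0 := by
    intro i h
    apply hσ1
    apply hσit i
    rw [← Function.iterate_succ_apply, h]
  have E1 : ∀ i, eseq (2*i) ∈ M ∧ eseq (2*i) ∉ M' := by
    intro i
    have h1 : 2*i+1 = 2*i+1 := rfl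
    have he : eseq (2*i) = s(σ^[i] v0, f (σ^[i] v0)) := by
      simp only [heseq]
      rw [hv2, hv21]
    constructor
    · rw [he]; exact partner_spec hM _
    · rw [he]
      intro hmem
      have := (mem_pm_iff hM' _ _).mp hmem
      -- f (σ^[i] v0) = g (σ^[i] v0)
      apply hsucc i
      rw [Function.iterate_succ_apply']
      show g (f (σ^[i] v0)) = σ^[i] v0
      rw [this, hgI]
  have E2 : ∀ i, eseq (2*i+1) ∈ M' ∧ eseq (2*i+1) ∉ M := by
    intro i
    have he : eseq (2*i+1) = s(f (σ^[i] v0), g (f (σ^[i] v0))) := by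
      simp only [heseq]
      have h1 : 2*i+1+1 = 2*(i+1) := by ring
      rw [h1, hv21, hv2, Function.iterate_succ_apply']
      rfl
    constructor
    · rw [he]; exact partner_spec hM' _
    · rw [he]
      intro hmem
      have h2 := (mem_pm_iff hM _ _).mp hmem
      have h3 : partner hM (f (σ^[i] v0)) = σ^[i] v0 := hfI (σ^[i] v0)
      rw [h3] at h2
      apply hsucc i
      rw [Function.iterate_succ_apply']
      show g (f (σ^[i] v0)) = σ^[i] v0
      exact h2
  -- injectivity of vseq on [1, 2k]
  have VD : ∀ s t, 1 ≤ s → s ≤ 2*k → 1 ≤ t → t ≤ 2*k → vseq s = vseq t → s = t := by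
    intro s t hs1 hs2 ht1 ht2 h
    rcases Nat.even_or_odd s with hes | hos <;> rcases Nat.even_or_odd t with het | hot
    · obtain ⟨i, hi⟩ := hes; obtain ⟨j, hj⟩ := het
      have hs : s = 2*i := by omega
      have ht : t = 2*j := by omega
      subst hs; subst ht
      rw [hv2, hv2] at h
      rcases le_or_gt i j with hle | hlt
      · have := hinj2 i j hle (by omega) h; omega
      · have := hinj2 j i (le_of_lt hlt) (by omega) h.symm; omega
    · obtain ⟨i, hi⟩ := hes; obtain ⟨j, hj⟩ := hot
      have hs : s = 2*i := by omega
      subst hs hj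
      rw [hv2, hv21] at h
      exact absurd h (D2 i j)
    · obtain ⟨i, hi⟩ := hos; obtain ⟨j, hj⟩ := het
      have ht : t = 2*j := by omega
      subst hi ht
      rw [hv2, hv21] at h
      exact absurd h.symm (D2 j i)
    · obtain ⟨i, hi⟩ := hos; obtain ⟨j, hj⟩ := hot
      subst hi hj
      rw [hv21, hv21] at h
      have h2 := hfI.injective h
      rcases le_or_gt i j with hle | hlt
      · have := hinj2 i j hle (by omega) h2; omega
      · have := hinj2 j i (le_of_lt hlt) (by omega) h2.symm; omega
  -- the walk
  have h0 : vseq 0 = v0 := by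
    have := hv2 0
    simpa using this
  have hkk : vseq (2*k) = v0 := (hv2 k).trans hk2
  set C : G.Walk v0 v0 := (buildWalk vseq hadj (2*k)).copy h0 hkk with hC
  have hedges : C.edges = (List.range (2*k)).map eseq := by
    rw [hC, Walk.edges_copy, buildWalk_edges]
  have hsupp : C.support = (List.range (2*k+1)).map vseq := by
    rw [hC, Walk.support_copy, buildWalk_support]
  -- parity membership, general form
  have Epar : ∀ t, (eseq t ∈ M ↔ Even t) ∧ (eseq t ∈ M' ↔ ¬ Even t) := by
    intro t
    rcases Nat.even_or_odd t with he | ho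
    · obtain ⟨i, hi⟩ := he
      have ht : t = 2*i := by omega
      subst ht
      have := E1 i
      constructor
      · simp [this.1, even_two_mul]
      · simp [this.2, even_two_mul]
    · obtain ⟨i, hi⟩ := ho
      subst hi
      have := E2 i
      constructor
      · simp [this.2, Nat.even_add_one, parity_simps]
      · simp [this.1, Nat.even_add_one, parity_simps]
  refine ⟨v0, C, ⟨?_, ?_, ?_⟩, ?_⟩
  · -- IsCycle
    rw [Walk.isCycle_def]
    refine ⟨?_, ?_, ?_⟩
    · rw [Walk.isTrail_def, hedges]
      apply List.Nodup.map_on ?_ List.nodup_range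
      intro x hx y hy hxy
      rw [List.mem_range] at hx hy
      have hxp := Epar x
      have hyp := Epar y
      by_cases hpar : Even x ↔ Even y
      · -- same parity: use Sym2 equality
        rw [Sym2.eq_iff] at hxy
        rcases hxy with ⟨h1, h2⟩ | ⟨h1, h2⟩
        · have := VD (x+1) (y+1) (by omega) (by omega) (by omega) (by omega) h2
          omega
        · -- vseq x = vseq (y+1) : mixed parity, contradiction
          exfalso
          rcases Nat.even_or_odd x with hex | hox
          · have hey : Even y := hpar.mp hex
            obtain ⟨i, hi⟩ := hex
            have hx2 : x = 2*i := by omega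
            obtain ⟨j, hj⟩ := hey
            have hy2 : y + 1 = 2*j+1 := by omega
            rw [hx2, hy2, hv2, hv21] at h1
            exact D2 i j h1
          · have hox' : ¬ Even x := Nat.not_even_iff_odd.mpr hox
            obtain ⟨i, hi⟩ := hox
            have hoy : ¬ Even y := fun h => hox' (hpar.mpr h)
            have hy0 : Odd y := Nat.not_even_iff_odd.mp hoy
            obtain ⟨j, hj⟩ := hy0
            have hy2 : y + 1 = 2*(j+1) := by omega
            rw [hi, hy2, hv21, hv2] at h1
            exact D2 (j+1) i h1.symm
      · -- different parity: membership in M differs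
        exfalso
        rcases Nat.even_or_odd x with hex | hox
        · have h1 : eseq x ∈ M := (Epar x).1.mpr hex
          have h2 : eseq y ∉ M := fun h => (by tauto : ¬ Even y) ((Epar y).1.mp h)
          rw [hxy] at h1
          exact h2 h1
        · have hox' : ¬ Even x := Nat.not_even_iff_odd.mpr hox
          have hey : Even y := by tauto
          have h1 : eseq y ∈ M := (Epar y).1.mpr hey
          have h2 : eseq x ∉ M := fun h => hox' ((Epar x).1.mp h)
          rw [hxy] at h2
          exact h2 h1
    · -- C ≠ nil
      intro h
      have := congrArg Walk.edges h
      rw [hedges] at this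
      simp only [Walk.edges_nil, List.map_eq_nil_iff, List.range_eq_nil] at this
      omega
    · -- support tail nodup
      rw [hsupp, List.range_succ_eq_map, List.map_cons, List.tail_cons, List.map_map]
      apply List.Nodup.map_on ?_ List.nodup_range
      intro x hx y hy hxy
      rw [List.mem_range] at hx hy
      have := VD (x+1) (y+1) (by omega) (by omega) (by omega) (by omega) hxy
      omega
  · -- Chain'
    rw [hedges, List.Chain', List.isChain_map]
    have h2k : 2*k = (2*k - 1) + 1 := by omega
    rw [h2k, List.isChain_range_succ]
    intro m hm
    rcases Nat.even_or_odd m with he | ho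
    · have h1 : eseq m ∈ M := (Epar m).1.mpr he
      have h2 : eseq (m+1) ∉ M := fun h => by
        have h3 := (Epar (m+1)).1.mp h
        rw [Nat.even_add_one] at h3
        exact h3 he
      exact iff_of_true h1 h2
    · have ho' : ¬ Even m := Nat.not_even_iff_odd.mpr ho
      have h1 : eseq m ∉ M := fun h => ho' ((Epar m).1.mp h)
      have h2 : eseq (m+1) ∈ M := (Epar (m+1)).1.mpr (by simp [Nat.even_add_one, ho'])
      apply iff_of_false h1
      simp [h2]
  · -- wrap condition
    intro e f' hhead hlast
    have h2k : 2*k = (2*k - 1) + 1 := by omega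
    have hh : e = eseq 0 := by
      rw [hedges, h2k, List.range_succ_eq_map] at hhead
      simp at hhead
      exact hhead.symm
    have hl : f' = eseq (2*k - 1) := by
      rw [hedges, h2k, List.range_succ, List.map_append] at hlast
      simp at hlast
      exact hlast.symm
    have he0 : eseq 0 ∈ M := (Epar 0).1.mpr (by simp)
    have hl0 : eseq (2*k-1) ∉ M := fun h => by
      have := (Epar (2*k-1)).1.mp h
      have : ¬ Even (2*k - 1) := by
        have : 2*k - 1 = 2*(k-1) + 1 := by omega
        simp [this, Nat.even_add_one, parity_simps]
      tauto
    rw [hh, hl]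
    apply iff_of_false hl0
    simp [he0]
  · -- edges in symmetric difference
    intro e he
    rw [hedges] at he
    simp only [List.mem_map, List.mem_range] at he
    obtain ⟨t, ht, rfl⟩ := he
    rcases Nat.even_or_odd t with het | hot
    · left
      exact ⟨((Epar t).1).mpr het, fun h => (by simpa [het] using (Epar t).2.mp h)⟩
    · right
      have hot' : ¬ Even t := Nat.not_even_iff_odd.mpr hot
      exact ⟨((Epar t).2).mpr hot', fun h => hot' ((Epar t).1.mp h)⟩

lemma walk_edges_getElem {u v : V} (p : G.Walk u v) :
    ∀ (i : ℕ) (h : i < p.edges.length), p.edges[i] = s(p.getVert i, p.getVert (i+1)) := by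
  induction p with
  | nil => intro i h; simp at h
  | cons hadj q ih =>
    intro i h
    cases i with
    | zero => simp [Walk.getVert_zero, Walk.getVert_cons_succ]
    | succ i =>
      simp only [Walk.edges_cons, List.getElem_cons_succ, Walk.getVert_cons_succ]
      exact ih i (by simpa [Walk.edges_cons] using h)

lemma walk_support_getElem {u v : V} (p : G.Walk u v) :
    ∀ (i : ℕ) (h : i < p.support.length), p.support[i] = p.getVert i := by
  induction p with
  | nil =>
    intro i h
    simp only [Walk.support_nil, List.length_cons, List.length_nil] at h
    interval_cases i
    · simp
  | cons hadj q ih =>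
    intro i h
    cases i with
    | zero => simp
    | succ i =>
      simp only [Walk.support_cons, List.getElem_cons_succ, Walk.getVert_cons_succ]
      exact ih i (by simpa using h)

lemma meets_of_forcing {S : Set (Sym2 V)} (hM : IsPMOn G Set.univ M)
    (hSM : S ⊆ M)
    (hforce : ∀ M', IsPMOn G Set.univ M' → S ⊆ M' → M' = M) {v : V} (c : G.Walk v v)
    (hc : IsAltCycle G M c) : ∃ e ∈ c.edges, e ∈ S := by
  classical
  by_contra hno
  push_neg at hno
  set n := c.length with hn
  have hn3 : 3 ≤ n := hc.1.three_le_length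
  set ee : ℕ → Sym2 V := fun i => s(c.getVert i, c.getVert (i+1)) with heedef
  have hlen : c.edges.length = n := c.length_edges
  have hEl : ∀ (i : ℕ) (h : i < n), c.edges[i]'(by omega) = ee i := by
    intro i h
    exact walk_edges_getElem c i (by omega)
  have hmem : ∀ x, x ∈ c.edges ↔ ∃ i, i < n ∧ x = ee i := by
    intro x
    rw [List.mem_iff_getElem]
    constructor
    · rintro ⟨i, hi, rfl⟩
      exact ⟨i, by omega, (hEl i (by omega)).symm ▸ rfl⟩
    · rintro ⟨i, hi, rfl⟩
      exact ⟨i, by omega, hEl i hi⟩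
  have hu0 : c.getVert n = c.getVert 0 := by
    rw [Walk.getVert_length, Walk.getVert_zero]
  -- injectivity of getVert on [1, n]
  have hinj : ∀ i j, 1 ≤ i → i ≤ n → 1 ≤ j → j ≤ n →
      c.getVert i = c.getVert j → i = j := by
    have hnodup := hc.1.support_nodup
    have hlsup : c.support.length = n + 1 := c.length_support
    have htl : c.support.tail.length = n := by
      rw [List.length_tail, hlsup]; omega
    intro i j hi1 hi2 hj1 hj2 hij
    have h1 : c.support.tail[i-1]'(by omega) = c.getVert i := by
      rw [List.getElem_tail]
      rw [walk_support_getElem c (i-1+1) (by omega)]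
      congr 1
      omega
    have h2 : c.support.tail[j-1]'(by omega) = c.getVert j := by
      rw [List.getElem_tail]
      rw [walk_support_getElem c (j-1+1) (by omega)]
      congr 1
      omega
    have h3 : c.support.tail[i-1]'(by omega) = c.support.tail[j-1]'(by omega) := by
      rw [h1, h2, hij]
    have := List.Nodup.getElem_inj_iff hnodup |>.mp h3
    omega
  -- indexed alternation
  have halt : ∀ i, i + 1 < n → (ee i ∈ M ↔ ee (i+1) ∉ M) := by
    have hchain := hc.2.1
    rw [List.Chain', List.isChain_iff_getElem] at hchain
    intro i hi
    have := hchain i (by omega)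
    rw [hEl i (by omega), hEl (i+1) (by omega)] at this
    exact this
  -- wrap alternation
  have hwrap : ee (n-1) ∈ M ↔ ee 0 ∉ M := by
    apply hc.2.2
    · rw [List.head?_eq_getElem?, List.getElem?_eq_getElem (by omega)]
      rw [hEl 0 (by omega)]
    · rw [List.getLast?_eq_getElem?]
      simp only [hlen]
      rw [List.getElem?_eq_getElem (by omega), hEl (n-1) (by omega)]
  -- normalized incidence
  have hnorm : ∀ i w, i < n → w ∈ ee i →
      ∃ t, 1 ≤ t ∧ t ≤ n ∧ c.getVert t = w ∧
        (t = i + 1 ∨ (t = i ∧ 1 ≤ i) ∨ (t = n ∧ i = 0)) := by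
    intro i w hi hw
    rw [heedef, Sym2.mem_iff] at hw
    rcases hw with rfl | rfl
    · rcases Nat.eq_zero_or_pos i with rfl | hpos
      · exact ⟨n, by omega, le_rfl, hu0, Or.inr (Or.inr ⟨rfl, rfl⟩)⟩
      · exact ⟨i, hpos, by omega, rfl, Or.inr (Or.inl ⟨rfl, hpos⟩)⟩
    · exact ⟨i+1, by omega, by omega, rfl, Or.inl rfl⟩
  -- distinct incident edges have opposite membership
  have hopp : ∀ i j, i < n → j < n → i ≠ j → ∀ w, w ∈ ee i → w ∈ ee j →
      (ee i ∈ M ↔ ee j ∉ M) := by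
    intro i j hi hj hne w hwi hwj
    obtain ⟨s, hs1, hs2, hs3, hs4⟩ := hnorm i w hi hwi
    obtain ⟨t, ht1, ht2, ht3, ht4⟩ := hnorm j w hj hwj
    have hst : s = t := hinj s t hs1 hs2 ht1 ht2 (hs3.trans ht3.symm)
    rcases hs4 with h1 | ⟨h1, h1'⟩ | ⟨h1, h1'⟩ <;>
      rcases ht4 with h2 | ⟨h2, h2'⟩ | ⟨h2, h2'⟩
    · omega
    · -- s = i+1, t = j : j = i + 1
      have hj' : j = i + 1 := by omega
      subst hj'
      exact halt i (by omega)
    · -- s = i+1, t = n, j = 0 : i = n-1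
      have hi' : i = n - 1 := by omega
      subst h2'
      rw [hi']
      exact hwrap
    · -- s = i, t = j+1 : i = j+1
      have hi' : i = j + 1 := by omega
      subst hi'
      have := halt j (by omega)
      tauto
    · omega
    · omega
    · -- s = n, i = 0, t = j + 1 : j = n - 1
      have hj' : j = n - 1 := by omega
      subst h1'
      rw [hj']
      tauto
    · omega
    · omega
  -- every support vertex has an incident cycle edge in M and one not in M
  have hcov : ∀ w, w ∈ c.support →
      (∃ x, x ∈ c.edges ∧ x ∈ M ∧ w ∈ x) ∧ (∃ x, x ∈ c.edges ∧ x ∉ M ∧ w ∈ x) := by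
    intro w hw
    rw [Walk.mem_support_iff_exists_getVert] at hw
    obtain ⟨t, htw, htn⟩ := hw
    have hmem0 : ee 0 ∈ c.edges := (hmem _).mpr ⟨0, by omega, rfl⟩
    have hmemn : ee (n-1) ∈ c.edges := (hmem _).mpr ⟨n-1, by omega, rfl⟩
    by_cases ht0 : t = 0 ∨ t = n
    · have hw0 : w = c.getVert 0 := by
        rcases ht0 with rfl | rfl
        · exact htw.symm
        · rw [← hu0]; exact htw.symm
      have hin0 : w ∈ ee 0 := by
        rw [heedef, Sym2.mem_iff]; left; exact hw0
      have hinn : w ∈ ee (n-1) := by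
        rw [heedef, Sym2.mem_iff]; right
        rw [show n - 1 + 1 = n by omega, hu0]
        exact hw0
      by_cases h0 : ee 0 ∈ M
      · refine ⟨⟨ee 0, hmem0, h0, hin0⟩, ⟨ee (n-1), hmemn, ?_, hinn⟩⟩
        intro h; exact (hwrap.mp h) h0
      · refine ⟨⟨ee (n-1), hmemn, hwrap.mpr h0, hinn⟩, ⟨ee 0, hmem0, h0, hin0⟩⟩
    · push_neg at ht0
      have ht1 : 1 ≤ t := by omega
      have ht2 : t ≤ n - 1 := by omega
      have hmemt : ee t ∈ c.edges := (hmem _).mpr ⟨t, by omega, rfl⟩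
      have hmemt1 : ee (t-1) ∈ c.edges := (hmem _).mpr ⟨t-1, by omega, rfl⟩
      have hint : w ∈ ee t := by
        rw [heedef, Sym2.mem_iff]; left; exact htw.symm
      have hint1 : w ∈ ee (t-1) := by
        rw [heedef, Sym2.mem_iff]; right
        rw [show t - 1 + 1 = t by omega]
        exact htw.symm
      have hh := halt (t-1) (by omega)
      rw [show t - 1 + 1 = t by omega] at hh
      by_cases h0 : ee t ∈ M
      · exact ⟨⟨ee t, hmemt, h0, hint⟩, ⟨ee (t-1), hmemt1, fun h => (hh.mp h) h0, hint1⟩⟩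
      · exact ⟨⟨ee (t-1), hmemt1, hh.mpr h0, hint1⟩, ⟨ee t, hmemt, h0, hint⟩⟩
  -- endpoints of cycle edges lie on the support
  have hsupp : ∀ x, x ∈ c.edges → ∀ w, w ∈ x → w ∈ c.support := by
    intro x hx w hw
    obtain ⟨i, hi, rfl⟩ := (hmem x).mp hx
    rw [heedef, Sym2.mem_iff] at hw
    rw [Walk.mem_support_iff_exists_getVert]
    rcases hw with rfl | rfl
    · exact ⟨i, rfl, by omega⟩
    · exact ⟨i+1, rfl, by omega⟩
  -- the modified matching
  set cE : Set (Sym2 V) := {x | x ∈ c.edges} with hcE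
  set M2 : Set (Sym2 V) := (M \ cE) ∪ (cE \ M) with hM2
  have hPM2 : IsPMOn G Set.univ M2 := by
    refine ⟨?_, fun _ _ _ _ => trivial, ?_, ?_⟩
    · rintro x (⟨hx, -⟩ | ⟨hx, -⟩)
      · exact hM.1 hx
      · exact c.edges_subset_edgeSet hx
    · rintro x (⟨hx, hx'⟩ | ⟨hx, hx'⟩) y (⟨hy, hy'⟩ | ⟨hy, hy'⟩) hxy w hwx hwy
      · exact hM.2.2.1 hx hy hxy w hwx hwy
      · -- x ∈ M \ cE, y ∈ cE \ M
        have hws : w ∈ c.support := hsupp y hy w hwy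
        obtain ⟨⟨z, hz1, hz2, hz3⟩, -⟩ := hcov w hws
        have : x = z := pm_unique hM hx hz2 hwx hz3
        exact hx' (this ▸ hz1)
      · have hws : w ∈ c.support := hsupp x hx w hwx
        obtain ⟨⟨z, hz1, hz2, hz3⟩, -⟩ := hcov w hws
        have : y = z := pm_unique hM hy hz2 hwy hz3
        exact hy' (this ▸ hz1)
      · -- both in cE \ M
        obtain ⟨i, hi, rfl⟩ := (hmem x).mp hx
        obtain ⟨j, hj, rfl⟩ := (hmem y).mp hy
        have hij : i ≠ j := by rintro rfl; exact hxy rfl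
        have := hopp i j hi hj hij w hwx hwy
        exact hx' (this.mpr hy')
    · intro w _
      by_cases hws : w ∈ c.support
      · obtain ⟨-, ⟨z, hz1, hz2, hz3⟩⟩ := hcov w hws
        exact ⟨z, Or.inr ⟨hz1, hz2⟩, hz3⟩
      · obtain ⟨z, hz1, hz2⟩ := hM.2.2.2 w trivial
        refine ⟨z, Or.inl ⟨hz1, ?_⟩, hz2⟩
        intro hzc
        exact hws (hsupp z hzc w hz2)
  have hS2 : S ⊆ M2 := by
    intro x hx
    exact Or.inl ⟨hSM hx, fun hc' => hno x hc' hx⟩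
  have heq := hforce M2 hPM2 hS2
  -- contradiction : an M-edge of the cycle
  obtain ⟨⟨x, hx1, hx2, -⟩, -⟩ := hcov v c.start_mem_support
  have : x ∈ M2 := heq.symm ▸ hx2
  rcases this with ⟨-, h⟩ | ⟨-, h⟩
  · exact h hx1
  · exact h hx2


end ForcingAux

/-- A subset `S ⊆ M` is a forcing set of the perfect matching `M` iff every
`M`-alternating cycle of `G` contains an edge of `S`. -/
theorem forcing_iff_meets_all_alternating_cycles {V : Type*} [Fintype V]
    (G : SimpleGraph V) (M S : Set (Sym2 V))
    (hM : IsPMOn G Set.univ M) (hS : S ⊆ M) :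
    IsForcingOn G Set.univ M S ↔
      ∀ (v : V) (c : G.Walk v v), IsAltCycle G M c → ∃ e ∈ c.edges, e ∈ S := by
  constructor
  · intro hforce v c hc
    exact ForcingAux.meets_of_forcing hM hS hforce.2 c hc
  · intro hmeet
    refine ⟨hS, ?_⟩
    intro M' hM' hSM'
    by_contra hne
    obtain ⟨v, c, hc, hsub⟩ := ForcingAux.exists_alt_cycle hM hM' hne
    obtain ⟨e, hec, heS⟩ := hmeet v c hc
    rcases hsub e hec with h | h
    · exact h.2 (hSM' heS)
    · exact h.2 (hS heS)
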